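/- Let (A, L) be a Lipschitz pair, i.e. A is a unital C*-algebra and L is a seminorm defined on a norm-dense subspace of the self-adjoint part sa(A) whose kernel is exactly ℝ·1_A. Then the Monge–Kantorovich function mk_L(φ, ψ) = sup{ |φ(a) − ψ(a)| : a ∈ sa(A), L(a) ≤ 1 } defines an extended metric on the state space S(A): it is symmetric, satisfies the triangle inequality, and mk_L(φ, ψ) = 0 if and only if φ = ψ. -/

import Mathlib

open scoped ENNReal

section common
variable {A : Type*} [NormedRing A] [StarRing A] [NormedAlgebra ℂ A]

/-- A state: unital positive linear functional. -/
def IsState (φ : A →ₗ[ℂ] ℂ) : Prop :=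
  φ 1 = 1 ∧ ∀ a : A, ∃ r : ℝ, 0 ≤ r ∧ φ (star a * a) = r

/-- Monge–Kantorovich extended distance associated with a seminorm
(with the convention `L a = ⊤` outside the domain of `L`). -/
noncomputable def mkDist (L : A → ℝ≥0∞) (φ ψ : A →ₗ[ℂ] ℂ) : ℝ≥0∞ :=
  ⨆ a ∈ {a : A | IsSelfAdjoint a ∧ L a ≤ 1}, edist (φ a) (ψ a)
end common

theorem state_bound' {A : Type*} [NormedRing A] [StarRing A] [CStarRing A]
    [NormedAlgebra ℂ A] [CompleteSpace A] [StarModule ℂ A]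
    (φ : A →ₗ[ℂ] ℂ) (hφ : IsState φ)
    {x : A} (hx : IsSelfAdjoint x) : ∃ t : ℝ, φ x = t ∧ |t| ≤ ‖x‖ := by
  obtain ⟨h1, hpos⟩ := hφ
  letI : CStarAlgebra A := {}
  letI := CStarAlgebra.spectralOrder A
  haveI := CStarAlgebra.spectralOrderedRing A
  have key : ∀ a : A, 0 ≤ a → ∃ r : ℝ, 0 ≤ r ∧ φ a = r := by
    intro a ha
    rw [StarOrderedRing.nonneg_iff] at ha
    induction ha using AddSubmonoid.closure_induction with
    | mem y hy => obtain ⟨s, rfl⟩ := hy; exact hpos s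
    | zero => exact ⟨0, le_rfl, by simp⟩
    | add y z _ _ hy hz =>
      obtain ⟨r, hr, hry⟩ := hy
      obtain ⟨s, hs, hsz⟩ := hz
      exact ⟨r + s, by positivity, by rw [map_add, hry, hsz]; push_cast; ring⟩
  have hA1 : 0 ≤ algebraMap ℝ A ‖x‖ - x := sub_nonneg.mpr hx.le_algebraMap_norm_self
  have hA2 : 0 ≤ x + algebraMap ℝ A ‖x‖ := by
    have h := hx.neg_algebraMap_norm_le_self
    have := sub_nonneg.mpr h
    rwa [sub_neg_eq_add] at this
  obtain ⟨r, hr, hra⟩ := key _ hA1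
  obtain ⟨s, hs, hsb⟩ := key _ hA2
  have hmap : φ (algebraMap ℝ A ‖x‖) = (‖x‖ : ℂ) := by
    rw [IsScalarTower.algebraMap_apply ℝ ℂ A, Algebra.algebraMap_eq_smul_one, map_smul,
      smul_eq_mul, h1, mul_one, Complex.coe_algebraMap]
  rw [map_sub, hmap] at hra
  have hsb' : φ x + (‖x‖:ℂ) = (s:ℂ) := by rw [map_add, hmap] at hsb; exact hsb
  have hφx : φ x = ((‖x‖ - r : ℝ) : ℂ) := by push_cast; linear_combination -hra
  refine ⟨‖x‖ - r, hφx, abs_le.mpr ⟨?_, by linarith⟩⟩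
  have : ((‖x‖ - r : ℝ) : ℂ) = ((s - ‖x‖ : ℝ) : ℂ) := by
    push_cast at hφx hsb' ⊢; linear_combination hsb' - hφx
  have := Complex.ofReal_inj.mp this
  linarith

/-- For a Lipschitz pair `(A, L)`, the Monge–Kantorovich function is an extended
metric on the state space: symmetric, triangle inequality, and zero iff equal. -/
theorem stmt0 {A : Type*} [NormedRing A] [StarRing A] [CStarRing A]
    [NormedAlgebra ℂ A] [CompleteSpace A] [StarModule ℂ A]
    (L : A → ℝ≥0∞)
    -- `L` is densely defined on the self-adjoint part:
    (hdense : ∀ a : A, IsSelfAdjoint a →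
      a ∈ closure {b : A | IsSelfAdjoint b ∧ L b ≠ ⊤})
    -- `L` is a seminorm:
    (hsub : ∀ a b : A, IsSelfAdjoint a → IsSelfAdjoint b → L (a + b) ≤ L a + L b)
    (hsmul : ∀ (r : ℝ) (a : A), IsSelfAdjoint a →
      L (((r : ℂ)) • a) = (‖r‖₊ : ℝ≥0∞) * L a)
    -- the kernel of `L` is exactly `ℝ·1`:
    (hker : ∀ a : A, IsSelfAdjoint a → (L a = 0 ↔ ∃ r : ℝ, a = ((r : ℂ)) • 1)) :
    (∀ φ ψ : A →ₗ[ℂ] ℂ, IsState φ → IsState ψ → mkDist L φ ψ = mkDist L ψ φ) ∧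
    (∀ φ ψ χ : A →ₗ[ℂ] ℂ, IsState φ → IsState ψ → IsState χ →
      mkDist L φ χ ≤ mkDist L φ ψ + mkDist L ψ χ) ∧
    (∀ φ ψ : A →ₗ[ℂ] ℂ, IsState φ → IsState ψ →
      (mkDist L φ ψ = 0 ↔ φ = ψ)) := by
  refine ⟨?_, ?_, ?_⟩
  · intro φ ψ _ _
    exact iSup_congr fun a => iSup_congr fun _ => edist_comm _ _
  · intro φ ψ χ _ _ _
    refine iSup₂_le fun a ha => (edist_triangle (φ a) (ψ a) (χ a)).trans (add_le_add ?_ ?_)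
    · exact le_iSup₂ (f := fun a (_ : a ∈ {a : A | IsSelfAdjoint a ∧ L a ≤ 1}) =>
        edist (φ a) (ψ a)) a ha
    · exact le_iSup₂ (f := fun a (_ : a ∈ {a : A | IsSelfAdjoint a ∧ L a ≤ 1}) =>
        edist (ψ a) (χ a)) a ha
  · intro φ ψ hφ hψ
    constructor
    · intro h0
      have hagree : ∀ a : A, IsSelfAdjoint a → L a ≤ 1 → φ a = ψ a := by
        intro a ha hL
        have hle : edist (φ a) (ψ a) ≤ mkDist L φ ψ :=
          le_iSup₂ (f := fun a (_ : a ∈ {a : A | IsSelfAdjoint a ∧ L a ≤ 1}) =>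
            edist (φ a) (ψ a)) a ⟨ha, hL⟩
        rw [h0, le_zero_iff] at hle
        exact edist_eq_zero.mp hle
      have hfin : ∀ a : A, IsSelfAdjoint a → L a ≠ ⊤ → φ a = ψ a := by
        intro a ha hL
        by_cases h0' : L a = 0
        · obtain ⟨r, rfl⟩ := (hker a ha).mp h0'
          rw [map_smul, map_smul, hφ.1, hψ.1]
        · set t : ℝ := (L a).toReal with ht_def
          have ht : 0 < t := ENNReal.toReal_pos h0' hL
          have hb : IsSelfAdjoint (((t⁻¹ : ℝ) : ℂ) • a) :=
            IsSelfAdjoint.smul (R := ℂ) (by simp [isSelfAdjoint_iff, Complex.star_def, Complex.conj_ofReal]) ha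
          have hLb : L (((t⁻¹ : ℝ) : ℂ) • a) = 1 := by
            rw [hsmul _ _ ha]
            have h1 : (‖t⁻¹‖₊ : ℝ≥0∞) = ENNReal.ofReal t⁻¹ :=
              Real.enorm_eq_ofReal (by positivity)
            rw [h1, ENNReal.ofReal_inv_of_pos ht, ht_def, ENNReal.ofReal_toReal hL,
              ENNReal.inv_mul_cancel h0' hL]
          have h := hagree _ hb hLb.le
          rw [map_smul, map_smul, smul_eq_mul, smul_eq_mul] at h
          have hne : ((t⁻¹ : ℝ) : ℂ) ≠ 0 := by
            simp only [ne_eq, Complex.ofReal_eq_zero]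
            positivity
          exact mul_left_cancel₀ hne h
      have hsa : ∀ a : A, IsSelfAdjoint a → φ a = ψ a := by
        intro a ha
        obtain ⟨b, hb, hbt⟩ := mem_closure_iff_seq_limit.mp (hdense a ha)
        have hdiff : ∀ n, ‖φ a - ψ a‖ ≤ 2 * ‖a - b n‖ := by
          intro n
          have hsan : IsSelfAdjoint (a - b n) := ha.sub (hb n).1
          obtain ⟨t₁, ht₁, ht₁'⟩ := state_bound' φ hφ hsan
          obtain ⟨t₂, ht₂, ht₂'⟩ := state_bound' ψ hψ hsan
          have heq : φ a - ψ a = φ (a - b n) - ψ (a - b n) := by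
            rw [map_sub, map_sub, hfin _ (hb n).1 (hb n).2]; ring
          rw [heq, ht₁, ht₂, ← Complex.ofReal_sub]
          rw [Complex.norm_real, Real.norm_eq_abs]
          calc |t₁ - t₂| ≤ |t₁| + |t₂| := abs_sub _ _
            _ ≤ ‖a - b n‖ + ‖a - b n‖ := add_le_add ht₁' ht₂'
            _ = 2 * ‖a - b n‖ := by ring
        have htend : Filter.Tendsto (fun n => 2 * ‖a - b n‖) Filter.atTop (nhds 0) := by
          have h1 : Filter.Tendsto (fun n => a - b n) Filter.atTop (nhds 0) := by
            simpa using (Filter.Tendsto.const_sub a hbt)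
          simpa using (h1.norm.const_mul 2)
        have hle : ‖φ a - ψ a‖ ≤ 0 :=
          ge_of_tendsto htend (Filter.Eventually.of_forall hdiff)
        exact sub_eq_zero.mp (norm_le_zero_iff.mp hle)
      ext a
      conv_lhs => rw [← realPart_add_I_smul_imaginaryPart a]
      conv_rhs => rw [← realPart_add_I_smul_imaginaryPart a]
      rw [map_add, map_add, map_smul, map_smul, hsa _ (realPart a).2, hsa _ (imaginaryPart a).2]
    · rintro rfl
      simp [mkDist]
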